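/- arXiv:1804.05660 — 2 statements merged into one kernel-verified Lean document; each statement's English description precedes it below -/
import Mathlib

section
/- Let $M$ be a non-degenerate Orlicz function (convex, $M(0)=0$, $M(t)>0$ for $t>0$). For $j\in\mathbb{N}$ let $n_j$ be minimal with $1/n_j \le M(2^{-j})$. Then there exists $K>1$ with $\sum_{n=1}^\infty M(K^{-1}M^{-1}(1/n)) < \infty$ if and only if there exists $K>1$ with $\sum_{j=1}^\infty \frac{M(K^{-1}2^{-j})}{M(2^{-j})} < \infty$. -/
open scoped ENNReal

namespace OrliczProofAux

lemma summable_iff_ofReal {f : ℕ → ℝ} (hf : ∀ n, 0 ≤ f n) :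
    Summable f ↔ (∑' n, ENNReal.ofReal (f n)) ≠ ⊤ := by
  constructor
  · intro h
    rw [← ENNReal.ofReal_tsum_of_nonneg hf h]
    exact ENNReal.ofReal_ne_top
  · intro h
    exact (ENNReal.summable_toReal h).congr fun n => by
      simp [ENNReal.toReal_ofReal (hf n)]

section
variable (M Minv : ℝ → ℝ)

lemma Mnonneg (hM0 : M 0 = 0) (hMmono : MonotoneOn M (Set.Ici 0)) :
    ∀ t : ℝ, 0 ≤ t → 0 ≤ M t := by
  intro t ht
  have := hMmono (Set.mem_Ici.2 le_rfl) (Set.mem_Ici.2 ht) ht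
  rwa [hM0] at this

lemma Mscale (hM0 : M 0 = 0) (hMconv : ConvexOn ℝ (Set.Ici 0) M) :
    ∀ t : ℝ, 0 ≤ t → ∀ c : ℝ, 0 ≤ c → c ≤ 1 → M (c * t) ≤ c * M t := by
  intro t ht c hc hc1
  have h := hMconv.2 (Set.mem_Ici.2 ht) (Set.mem_Ici.2 (le_refl (0:ℝ)))
    hc (by linarith : (0:ℝ) ≤ 1 - c) (by ring)
  simp only [smul_eq_mul, mul_zero, add_zero, hM0] at h
  linarith

lemma Mhalf (hM0 : M 0 = 0) (hMconv : ConvexOn ℝ (Set.Ici 0) M) :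
    ∀ t : ℝ, 0 ≤ t → M (t / 2) ≤ M t / 2 := by
  intro t ht
  have := Mscale M hM0 hMconv t ht (1/2) (by norm_num) (by norm_num)
  have e : (1/2 : ℝ) * t = t / 2 := by ring
  rw [e] at this
  linarith

lemma MinvLt (hMmono : MonotoneOn M (Set.Ici 0)) :
    ∀ u t : ℝ, 0 ≤ u → 0 ≤ t → M u < M t → u < t := by
  intro u t hu ht h
  by_contra hc
  push_neg at hc
  have := hMmono (Set.mem_Ici.2 ht) (Set.mem_Ici.2 hu) hc
  linarith

lemma MinvLe (hMmono : MonotoneOn M (Set.Ici 0))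
    (hMinv_nonneg : ∀ s : ℝ, 0 ≤ s → 0 ≤ Minv s)
    (hMinv_left : ∀ t : ℝ, 0 ≤ t → Minv (M t) = t)
    (hMinv_right : ∀ s : ℝ, 0 ≤ s → M (Minv s) = s) :
    ∀ s t : ℝ, 0 ≤ s → 0 ≤ t → s ≤ M t → Minv s ≤ t := by
  intro s t hs ht hst
  by_contra hc
  push_neg at hc
  have h1 : M t ≤ M (Minv s) :=
    hMmono (Set.mem_Ici.2 ht) (Set.mem_Ici.2 (hMinv_nonneg s hs)) hc.le
  rw [hMinv_right s hs] at h1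
  have hMt : M t = s := le_antisymm h1 hst
  have : Minv s = t := by rw [← hMt, hMinv_left t ht]
  rw [this] at hc
  exact lt_irrefl t hc

end

/-- the dyadic scale `2^{-(j+1)}`. -/
noncomputable def q (j : ℕ) : ℝ := ((2:ℝ) ^ (j+1))⁻¹

lemma q_pos (j : ℕ) : 0 < q j := by unfold q; positivity

lemma q_succ (j : ℕ) : q (j+1) = q j / 2 := by
  unfold q
  rw [pow_succ]
  field_simp

lemma q_anti {j j' : ℕ} (h : j ≤ j') : q j' ≤ q j := by
  unfold q
  have h1 : (0:ℝ) < 2 ^ (j+1) := by positivity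
  have h2 : (2:ℝ) ^ (j+1) ≤ 2 ^ (j'+1) :=
    pow_le_pow_right₀ (by norm_num) (by omega)
  exact inv_anti₀ h1 h2

lemma one_le_two_pow' (m : ℕ) : (1:ℝ) ≤ 2 ^ m := by
  have := pow_le_pow_left₀ (by norm_num : (0:ℝ) ≤ 1) (by norm_num : (1:ℝ) ≤ 2) m
  simpa using this

lemma q_le_one (j : ℕ) : q j ≤ 1 := by
  unfold q
  rw [inv_le_one_iff₀]
  right
  exact one_le_two_pow' (j+1)

/-- Direction 1: summability of the `n`-series implies summability of the `j`-series
(with doubled constant). -/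
lemma dir1 (M Minv : ℝ → ℝ)
    (hM0 : M 0 = 0) (hMpos : ∀ t : ℝ, 0 < t → 0 < M t)
    (hMmono : MonotoneOn M (Set.Ici 0)) (hMconv : ConvexOn ℝ (Set.Ici 0) M)
    (hMinv_nonneg : ∀ s : ℝ, 0 ≤ s → 0 ≤ Minv s)
    (hMinv_left : ∀ t : ℝ, 0 ≤ t → Minv (M t) = t)
    (hMinv_right : ∀ s : ℝ, 0 ≤ s → M (Minv s) = s)
    (K : ℝ) (hK : 1 < K)
    (hsum : Summable fun n : ℕ => M (K⁻¹ * Minv (1 / ((n : ℝ) + 1)))) :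
    Summable fun j : ℕ => M ((2*K)⁻¹ * q j) / M (q j) := by
  have hMnn := Mnonneg M hM0 hMmono
  have hKpos : (0:ℝ) < K := by linarith
  have hKinv : (0:ℝ) < K⁻¹ := by positivity
  have h2Kinv : (0:ℝ) < (2*K)⁻¹ := by positivity
  set F : ℕ → ℝ := fun n => M (K⁻¹ * Minv (1 / ((n : ℝ) + 1))) with hF
  have hFnn : ∀ n, 0 ≤ F n := by
    intro n
    apply hMnn
    exact mul_nonneg hKinv.le (hMinv_nonneg _ (by positivity))
  set a : ℕ → ℝ := fun j => (M (q j))⁻¹ with ha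
  have hMq_pos : ∀ j, 0 < M (q j) := fun j => hMpos _ (q_pos j)
  -- choose j0 with M (q j) ≤ 1 for j ≥ j0, hence a j ≥ 1
  obtain ⟨j0, hj0⟩ : ∃ m : ℕ, M 1 < 2 ^ m := pow_unbounded_of_one_lt (M 1) one_lt_two
  have hMq_le_one : ∀ j, j0 ≤ j → M (q j) ≤ 1 := by
    intro j hj
    have h1 : M (q j) ≤ M (q j0) :=
      hMmono (Set.mem_Ici.2 (q_pos j).le) (Set.mem_Ici.2 (q_pos j0).le) (q_anti hj)
    have h2 : M (q j0) = M (q j0 * 1) := by rw [mul_one]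
    have h3 : M (q j0 * 1) ≤ q j0 * M 1 :=
      Mscale M hM0 hMconv 1 (by norm_num) (q j0) (q_pos j0).le (q_le_one j0)
    have h4 : q j0 * M 1 ≤ 1 := by
      have hp : (0:ℝ) < 2 ^ (j0+1) := by positivity
      show ((2:ℝ)^(j0+1))⁻¹ * M 1 ≤ 1
      rw [inv_mul_le_iff₀ hp, mul_one]
      have : (2:ℝ) ^ j0 ≤ 2 ^ (j0+1) := pow_le_pow_right₀ (by norm_num) (by omega)
      linarith
    linarith
  have ha_one : ∀ j, j0 ≤ j → 1 ≤ a j := by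
    intro j hj
    simp only [ha]
    rw [one_le_inv_iff₀]
    exact ⟨hMq_pos j, hMq_le_one j hj⟩
  -- the blocks
  set I : ℕ → Finset ℕ := fun j => Finset.Ico (⌈a j⌉₊ - 1) (⌈a j⌉₊ - 1 + ⌊a j⌋₊) with hI
  -- membership facts
  have hmem : ∀ j, j0 ≤ j → ∀ n ∈ I j,
      M (q (j+1)) < 1 / ((n : ℝ) + 1) ∧ 1 / ((n : ℝ) + 1) ≤ M (q j) := by
    intro j hj n hn
    have haj := ha_one j hj
    have hceil : 1 ≤ ⌈a j⌉₊ := by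
      have h1 : (1:ℝ) ≤ (⌈a j⌉₊ : ℝ) := le_trans haj (Nat.le_ceil _)
      exact_mod_cast h1
    simp only [hI, Finset.mem_Ico] at hn
    have hlow : ⌈a j⌉₊ ≤ n + 1 := by omega
    have hup : n + 1 ≤ ⌈a j⌉₊ - 1 + ⌊a j⌋₊ := by omega
    have hlowR : a j ≤ (n : ℝ) + 1 := by
      calc a j ≤ (⌈a j⌉₊ : ℝ) := Nat.le_ceil _
        _ ≤ (n : ℝ) + 1 := by exact_mod_cast hlow
    have hupR : (n : ℝ) + 1 < 2 * a j := by
      have h1 : ((⌈a j⌉₊ - 1 + ⌊a j⌋₊ : ℕ) : ℝ) = (⌈a j⌉₊ : ℝ) - 1 + (⌊a j⌋₊ : ℝ) := by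
        rw [Nat.cast_add, Nat.cast_sub hceil, Nat.cast_one]
      have h2 : ((n : ℕ) : ℝ) + 1 ≤ ((⌈a j⌉₊ - 1 + ⌊a j⌋₊ : ℕ) : ℝ) := by exact_mod_cast hup
      have h3 : (⌈a j⌉₊ : ℝ) < a j + 1 := Nat.ceil_lt_add_one (by linarith)
      have h4 : (⌊a j⌋₊ : ℝ) ≤ a j := Nat.floor_le (by linarith)
      rw [h1] at h2
      linarith
    have haeq : a j * M (q j) = 1 := by
      simp only [ha]; rw [inv_mul_cancel₀ (hMq_pos j).ne']
    have hnp : (0:ℝ) < (n : ℝ) + 1 := by positivity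
    constructor
    · have hMq2 : M (q (j+1)) ≤ M (q j) / 2 := by
        rw [q_succ]
        exact Mhalf M hM0 hMconv (q j) (q_pos j).le
      have hlt : M (q j) / 2 < 1 / ((n:ℝ)+1) := by
        rw [div_lt_div_iff₀ (by norm_num) hnp]
        nlinarith [hMq_pos j]
      linarith
    · rw [div_le_iff₀ hnp]
      nlinarith [hMq_pos j]
  -- each n in I j gives F n ≥ M (K⁻¹ * q (j+1))
  have hFlow : ∀ j, j0 ≤ j → ∀ n ∈ I j, M (K⁻¹ * q (j+1)) ≤ F n := by
    intro j hj n hn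
    obtain ⟨h1, h2⟩ := hmem j hj n hn
    have htnn : 0 ≤ Minv (1 / ((n : ℝ) + 1)) := hMinv_nonneg _ (by positivity)
    have hMt : M (Minv (1 / ((n : ℝ) + 1))) = 1 / ((n : ℝ) + 1) :=
      hMinv_right _ (by positivity)
    have hqt : q (j+1) < Minv (1 / ((n : ℝ) + 1)) := by
      apply MinvLt M hMmono _ _ (q_pos (j+1)).le htnn
      rw [hMt]; exact h1
    apply hMmono (Set.mem_Ici.2 (mul_nonneg hKinv.le (q_pos (j+1)).le))
      (Set.mem_Ici.2 (mul_nonneg hKinv.le htnn))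
    exact mul_le_mul_of_nonneg_left hqt.le hKinv.le
  -- the key inequality
  have hkey : ∀ j, j0 ≤ j → M ((2*K)⁻¹ * q j) / M (q j) ≤ 2 * ∑ n ∈ I j, F n := by
    intro j hj
    have hqq : (2*K)⁻¹ * q j = K⁻¹ * q (j+1) := by
      rw [q_succ, mul_inv]
      ring
    have hcard : (I j).card = ⌊a j⌋₊ := by
      simp only [hI, Nat.card_Ico]
      omega
    have hsumlow : (⌊a j⌋₊ : ℝ) * M (K⁻¹ * q (j+1)) ≤ ∑ n ∈ I j, F n := by
      have := Finset.card_nsmul_le_sum (I j) F (M (K⁻¹ * q (j+1))) (hFlow j hj)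
      rwa [hcard, nsmul_eq_mul] at this
    have hcnn : 0 ≤ M (K⁻¹ * q (j+1)) :=
      hMnn _ (mul_nonneg hKinv.le (q_pos (j+1)).le)
    have hfloor1 : (1:ℝ) ≤ (⌊a j⌋₊ : ℝ) := by
      have h1 : (1:ℕ) ≤ ⌊a j⌋₊ := Nat.le_floor (by simpa using ha_one j hj)
      exact_mod_cast h1
    have hfloor2 : a j ≤ 2 * (⌊a j⌋₊ : ℝ) := by
      have := Nat.lt_floor_add_one (a j)
      linarith
    have heq : M ((2*K)⁻¹ * q j) / M (q j) = a j * M (K⁻¹ * q (j+1)) := by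
      rw [hqq, div_eq_mul_inv, mul_comm]
    rw [heq]
    calc a j * M (K⁻¹ * q (j+1)) ≤ 2 * (⌊a j⌋₊ : ℝ) * M (K⁻¹ * q (j+1)) :=
          mul_le_mul_of_nonneg_right hfloor2 hcnn
      _ = 2 * ((⌊a j⌋₊ : ℝ) * M (K⁻¹ * q (j+1))) := by ring
      _ ≤ 2 * ∑ n ∈ I j, F n := by linarith [hsumlow]
  -- disjointness
  have hdisj : ∀ n : ℕ, ∀ j j' : ℕ, j0 ≤ j → j0 ≤ j' → n ∈ I j → n ∈ I j' → j = j' := by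
    intro n j j' hj hj' hn hn'
    by_contra hne
    rcases Nat.lt_or_ge j j' with h | h
    · obtain ⟨h1, _⟩ := hmem j hj n hn
      obtain ⟨_, h2⟩ := hmem j' hj' n hn'
      have : M (q j') ≤ M (q (j+1)) :=
        hMmono (Set.mem_Ici.2 (q_pos j').le) (Set.mem_Ici.2 (q_pos (j+1)).le)
          (q_anti (by omega))
      linarith
    · have h' : j' < j := by omega
      obtain ⟨h1, _⟩ := hmem j' hj' n hn'
      obtain ⟨_, h2⟩ := hmem j hj n hn
      have : M (q j) ≤ M (q (j'+1)) :=
        hMmono (Set.mem_Ici.2 (q_pos j).le) (Set.mem_Ici.2 (q_pos (j'+1)).le)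
          (q_anti (by omega))
      linarith
  -- now the ENNReal computation
  set G : ℕ → ℝ := fun j => M ((2*K)⁻¹ * q j) / M (q j) with hG
  have hGnn : ∀ j, 0 ≤ G j := fun j =>
    div_nonneg (hMnn _ (mul_nonneg h2Kinv.le (q_pos j).le)) (hMnn _ (q_pos j).le)
  refine (summable_nat_add_iff j0).mp ?_
  refine (summable_iff_ofReal (f := fun j => G (j + j0)) (fun j => hGnn (j + j0))).2 ?_
  have hFtop : (∑' n, ENNReal.ofReal (F n)) ≠ ⊤ := (summable_iff_ofReal hFnn).1 hsum
  have step1 : (∑' j, ENNReal.ofReal (G (j + j0)))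
      ≤ ∑' j, 2 * ∑ n ∈ I (j + j0), ENNReal.ofReal (F n) := by
    apply ENNReal.tsum_le_tsum
    intro j
    have h1 := hkey (j + j0) (by omega)
    calc ENNReal.ofReal (G (j + j0)) ≤ ENNReal.ofReal (2 * ∑ n ∈ I (j + j0), F n) :=
          ENNReal.ofReal_le_ofReal h1
      _ = ENNReal.ofReal 2 * ENNReal.ofReal (∑ n ∈ I (j + j0), F n) :=
          ENNReal.ofReal_mul (by norm_num)
      _ = 2 * ∑ n ∈ I (j + j0), ENNReal.ofReal (F n) := by
          rw [ENNReal.ofReal_sum_of_nonneg (fun n _ => hFnn n)]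
          norm_num
  have step2 : (∑' j, 2 * ∑ n ∈ I (j + j0), ENNReal.ofReal (F n))
      ≤ 2 * ∑' n, ENNReal.ofReal (F n) := by
    rw [ENNReal.tsum_mul_left]
    apply mul_le_mul_right
    calc (∑' j, ∑ n ∈ I (j + j0), ENNReal.ofReal (F n))
        = ∑' j, ∑' n, (↑(I (j + j0)) : Set ℕ).indicator (fun n => ENNReal.ofReal (F n)) n := by
          congr 1
          funext j
          exact sum_eq_tsum_indicator _ _
      _ = ∑' n, ∑' j, (↑(I (j + j0)) : Set ℕ).indicator (fun n => ENNReal.ofReal (F n)) n :=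
          ENNReal.tsum_comm
      _ ≤ ∑' n, ENNReal.ofReal (F n) := by
          apply ENNReal.tsum_le_tsum
          intro n
          by_cases hn : ∃ j : ℕ, n ∈ I (j + j0)
          · obtain ⟨j₁, hj₁⟩ := hn
            have hz : ∀ j' : ℕ, j' ≠ j₁ →
                (↑(I (j' + j0)) : Set ℕ).indicator (fun n => ENNReal.ofReal (F n)) n = 0 := by
              intro j' hne
              apply Set.indicator_of_notMem
              intro hmem'
              exact hne (by
                have := hdisj n (j' + j0) (j₁ + j0) (by omega) (by omega)
                  (Finset.mem_coe.1 hmem') hj₁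
                omega)
            rw [tsum_eq_single j₁ hz, Set.indicator_of_mem (Finset.mem_coe.2 hj₁)]
          · have hz : ∀ j : ℕ,
                (↑(I (j + j0)) : Set ℕ).indicator (fun n => ENNReal.ofReal (F n)) n = 0 := by
              intro j
              apply Set.indicator_of_notMem
              intro hmem'
              exact hn ⟨j, Finset.mem_coe.1 hmem'⟩
            simp only [hz, tsum_zero]
            exact zero_le
  have hle : (∑' j, ENNReal.ofReal (G (j + j0))) ≤ 2 * ∑' n, ENNReal.ofReal (F n) :=
    le_trans step1 step2
  exact ne_top_of_le_ne_top (ENNReal.mul_ne_top (by norm_num) hFtop) hle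

/-- Direction 2: summability of the `j`-series implies summability of the `n`-series
(with doubled constant). -/
lemma dir2 (M Minv : ℝ → ℝ)
    (hM0 : M 0 = 0) (hMpos : ∀ t : ℝ, 0 < t → 0 < M t)
    (hMmono : MonotoneOn M (Set.Ici 0)) (hMconv : ConvexOn ℝ (Set.Ici 0) M)
    (hMinv_nonneg : ∀ s : ℝ, 0 ≤ s → 0 ≤ Minv s)
    (hMinv_left : ∀ t : ℝ, 0 ≤ t → Minv (M t) = t)
    (hMinv_right : ∀ s : ℝ, 0 ≤ s → M (Minv s) = s)
    (K : ℝ) (hK : 1 < K)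
    (hsum : Summable fun j : ℕ => M (K⁻¹ * q j) / M (q j)) :
    Summable fun n : ℕ => M ((2*K)⁻¹ * Minv (1 / ((n : ℝ) + 1))) := by
  have hMnn := Mnonneg M hM0 hMmono
  have hKpos : (0:ℝ) < K := by linarith
  have hKinv : (0:ℝ) < K⁻¹ := by positivity
  have h2Kinv : (0:ℝ) < (2*K)⁻¹ := by positivity
  have hMq_pos : ∀ j, 0 < M (q j) := fun j => hMpos _ (q_pos j)
  set F : ℕ → ℝ := fun n => M ((2*K)⁻¹ * Minv (1 / ((n : ℝ) + 1))) with hF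
  have hFnn : ∀ n, 0 ≤ F n := by
    intro n
    apply hMnn
    exact mul_nonneg h2Kinv.le (hMinv_nonneg _ (by positivity))
  set G : ℕ → ℝ := fun j => M (K⁻¹ * q j) / M (q j) with hG
  have hGnn : ∀ j, 0 ≤ G j := fun j =>
    div_nonneg (hMnn _ (mul_nonneg hKinv.le (q_pos j).le)) (hMnn _ (q_pos j).le)
  have hGtop : (∑' j, ENNReal.ofReal (G j)) ≠ ⊤ := (summable_iff_ofReal hGnn).1 hsum
  -- threshold n0
  have hMhalfpos : 0 < M (1/2) := hMpos _ (by norm_num)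
  set n0 : ℕ := ⌈(M (1/2))⁻¹⌉₊ with hn0
  -- the blocks as sets
  set B : ℕ → Set ℕ := fun j =>
    {n : ℕ | q (j+1) < Minv (1 / ((n : ℝ) + 1)) ∧ Minv (1 / ((n : ℝ) + 1)) ≤ q j} with hB
  -- per-element bound
  have hbound : ∀ m : ℕ,
      ENNReal.ofReal (F (m + n0)) ≤
        ∑' j, (B j).indicator (fun _ => ENNReal.ofReal (M (K⁻¹ * q (j+1)))) (m + n0) := by
    intro m
    set n : ℕ := m + n0 with hn
    have hnp : (0:ℝ) < (n : ℝ) + 1 := by positivity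
    set t : ℝ := Minv (1 / ((n : ℝ) + 1)) with ht
    have htnn : 0 ≤ t := hMinv_nonneg _ (by positivity)
    have hMt : M t = 1 / ((n : ℝ) + 1) := hMinv_right _ (by positivity)
    have hs : 1 / ((n : ℝ) + 1) ≤ M (1/2) := by
      have h1 : (M (1/2))⁻¹ ≤ (n0 : ℝ) := Nat.le_ceil _
      have h2 : (n0 : ℝ) ≤ (n : ℝ) := by exact_mod_cast Nat.le_add_left n0 m
      have h3 : (0:ℝ) < (M (1/2))⁻¹ := by positivity
      have h4 := one_div_lt_one_div_of_lt h3 (by linarith : (M (1/2))⁻¹ < (n:ℝ) + 1)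
      simp only [one_div, inv_inv] at h4 ⊢
      linarith
    have ht2 : t ≤ 1/2 := MinvLe M Minv hMmono hMinv_nonneg hMinv_left hMinv_right
      _ _ (by positivity) (by norm_num) hs
    have htpos : 0 < t := by
      rcases lt_or_eq_of_le htnn with h | h
      · exact h
      · exfalso
        have hMt0 : M t = 0 := by rw [← h, hM0]
        rw [hMt] at hMt0
        have hpos : (0:ℝ) < 1 / ((n : ℝ) + 1) := by positivity
        linarith
    -- find j
    obtain ⟨k, hk⟩ : ∃ k : ℕ, ((1:ℝ)/2) ^ k < t :=
      exists_pow_lt_of_lt_one htpos (by norm_num)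
    have hqpow : ∀ i : ℕ, q i = ((1:ℝ)/2) ^ (i+1) := by
      intro i
      unfold q
      rw [one_div, inv_pow]
    have hPex : ∃ i : ℕ, q (i+1) < t := by
      refine ⟨k, ?_⟩
      rw [hqpow]
      calc ((1:ℝ)/2) ^ (k+1+1) ≤ ((1:ℝ)/2) ^ k :=
            pow_le_pow_of_le_one (by norm_num) (by norm_num) (by omega)
        _ < t := hk
    set j : ℕ := Nat.find hPex with hj
    have hPj : q (j+1) < t := Nat.find_spec hPex
    have htq : t ≤ q j := by
      rcases Nat.eq_zero_or_pos j with h0 | h0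
      · rw [h0]
        have hq0 : q 0 = 1/2 := by unfold q; norm_num
        rw [hq0]; exact ht2
      · obtain ⟨j', hj'⟩ := Nat.exists_eq_succ_of_ne_zero h0.ne'
        have hmin := Nat.find_min hPex (by omega : j' < j)
        push_neg at hmin
        rw [hj']
        exact hmin
    have hmemB : n ∈ B j := ⟨hPj, htq⟩
    have hFle : F n ≤ M (K⁻¹ * q (j+1)) := by
      have hqq : K⁻¹ * q (j+1) = (2*K)⁻¹ * q j := by
        rw [q_succ, mul_inv]
        ring
      rw [hqq]
      apply hMmono (Set.mem_Ici.2 (mul_nonneg h2Kinv.le htnn))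
        (Set.mem_Ici.2 (mul_nonneg h2Kinv.le (q_pos j).le))
      exact mul_le_mul_of_nonneg_left htq h2Kinv.le
    calc ENNReal.ofReal (F n) ≤ ENNReal.ofReal (M (K⁻¹ * q (j+1))) :=
          ENNReal.ofReal_le_ofReal hFle
      _ = (B j).indicator (fun _ => ENNReal.ofReal (M (K⁻¹ * q (j+1)))) n :=
          (Set.indicator_of_mem hmemB
            (fun _ => ENNReal.ofReal (M (K⁻¹ * q (j+1))))).symm
      _ ≤ ∑' j', (B j').indicator (fun _ => ENNReal.ofReal (M (K⁻¹ * q (j'+1)))) n :=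
          ENNReal.le_tsum j
  -- counting bound for each block
  have hcount : ∀ j : ℕ,
      (∑' n, (B j).indicator (fun _ => ENNReal.ofReal (M (K⁻¹ * q (j+1)))) n)
        ≤ ENNReal.ofReal (G (j+1)) := by
    intro j
    set c : ℝ≥0∞ := ENNReal.ofReal (M (K⁻¹ * q (j+1))) with hc
    set b : ℝ := (M (q (j+1)))⁻¹ with hb
    have hbnn : (0:ℝ) ≤ b := by
      rw [hb]; exact (inv_pos.2 (hMq_pos (j+1))).le
    set N : ℕ := ⌊b⌋₊ with hN
    have hsub : B j ⊆ ↑(Finset.range N) := by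
      intro n hn
      obtain ⟨h1, _⟩ := hn
      have htnn : 0 ≤ Minv (1 / ((n : ℝ) + 1)) := hMinv_nonneg _ (by positivity)
      have hMt : M (Minv (1 / ((n : ℝ) + 1))) = 1 / ((n : ℝ) + 1) :=
        hMinv_right _ (by positivity)
      have h2 : M (q (j+1)) ≤ 1 / ((n : ℝ) + 1) := by
        rw [← hMt]
        exact hMmono (Set.mem_Ici.2 (q_pos (j+1)).le) (Set.mem_Ici.2 htnn) h1.le
      have hnp : (0:ℝ) < (n : ℝ) + 1 := by positivity
      have h4 : ((n:ℝ) + 1) ≤ b := by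
        rw [hb, ← one_div, le_div_iff₀ (hMq_pos (j+1))]
        have h3 : ((n:ℝ)+1) * M (q (j+1)) ≤ ((n:ℝ)+1) * (1/((n:ℝ)+1)) :=
          mul_le_mul_of_nonneg_left h2 hnp.le
        have h3' : ((n:ℝ)+1) * (1/((n:ℝ)+1)) = 1 := by field_simp
        linarith
      have h5 : n + 1 ≤ N := Nat.le_floor (by exact_mod_cast h4)
      simp only [Finset.coe_range, Set.mem_Iio]
      omega
    calc (∑' n, (B j).indicator (fun _ => c) n)
        ≤ ∑' n, (↑(Finset.range N) : Set ℕ).indicator (fun _ => c) n :=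
          ENNReal.tsum_le_tsum fun n =>
            Set.indicator_le_indicator_of_subset hsub (fun _ => zero_le) n
      _ = ∑ n ∈ Finset.range N, c := (sum_eq_tsum_indicator _ _).symm
      _ = (N : ℝ≥0∞) * c := by
          rw [Finset.sum_const, Finset.card_range, nsmul_eq_mul]
      _ ≤ ENNReal.ofReal b * c := by
          apply mul_le_mul_left
          rw [← ENNReal.ofReal_natCast]
          exact ENNReal.ofReal_le_ofReal (Nat.floor_le hbnn)
      _ = ENNReal.ofReal (b * M (K⁻¹ * q (j+1))) := by
          rw [ENNReal.ofReal_mul hbnn]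
      _ = ENNReal.ofReal (G (j+1)) := by
          congr 1
          simp only [hG, hb]
          rw [div_eq_mul_inv, mul_comm]
  -- assemble
  refine (summable_nat_add_iff n0).mp ?_
  refine (summable_iff_ofReal (f := fun m => F (m + n0)) (fun m => hFnn (m + n0))).2 ?_
  have chain : (∑' m, ENNReal.ofReal (F (m + n0)))
      ≤ ∑' j, ENNReal.ofReal (G j) := by
    calc (∑' m, ENNReal.ofReal (F (m + n0)))
        ≤ ∑' m, ∑' j, (B j).indicator
            (fun _ => ENNReal.ofReal (M (K⁻¹ * q (j+1)))) (m + n0) :=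
          ENNReal.tsum_le_tsum hbound
      _ ≤ ∑' n, ∑' j, (B j).indicator
            (fun _ => ENNReal.ofReal (M (K⁻¹ * q (j+1)))) n :=
          ENNReal.tsum_comp_le_tsum_of_injective (add_left_injective n0)
            (fun n => ∑' j, (B j).indicator
              (fun _ => ENNReal.ofReal (M (K⁻¹ * q (j+1)))) n)
      _ = ∑' j, ∑' n, (B j).indicator
            (fun _ => ENNReal.ofReal (M (K⁻¹ * q (j+1)))) n := ENNReal.tsum_comm
      _ ≤ ∑' j, ENNReal.ofReal (G (j+1)) := ENNReal.tsum_le_tsum hcount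
      _ ≤ ∑' j, ENNReal.ofReal (G j) :=
          ENNReal.tsum_comp_le_tsum_of_injective (add_left_injective 1)
            (fun j => ENNReal.ofReal (G j))
  exact ne_top_of_le_ne_top hGtop chain

end OrliczProofAux

/-- For a non-degenerate Orlicz function `M` (convex, increasing, `M 0 = 0`, `M t > 0` for
`t > 0`) with inverse `Minv` on `[0, ∞)`:  there exists `K > 1` with
`∑_n M(K⁻¹ M⁻¹(1/n)) < ∞` if and only if there exists `K > 1` with
`∑_j M(K⁻¹ 2⁻ʲ)/M(2⁻ʲ) < ∞`. -/
theorem orlicz_summability_equiv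
    (M : ℝ → ℝ) (Minv : ℝ → ℝ)
    (hM0 : M 0 = 0)
    (hMpos : ∀ t : ℝ, 0 < t → 0 < M t)
    (hMmono : MonotoneOn M (Set.Ici 0))
    (hMconv : ConvexOn ℝ (Set.Ici 0) M)
    (hMinv_nonneg : ∀ s : ℝ, 0 ≤ s → 0 ≤ Minv s)
    (hMinv_left : ∀ t : ℝ, 0 ≤ t → Minv (M t) = t)
    (hMinv_right : ∀ s : ℝ, 0 ≤ s → M (Minv s) = s) :
    (∃ K : ℝ, 1 < K ∧ Summable (fun n : ℕ => M (K⁻¹ * Minv (1 / ((n : ℝ) + 1))))) ↔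
    (∃ K : ℝ, 1 < K ∧
      Summable (fun j : ℕ => M (K⁻¹ * 2 ^ (-((j : ℝ) + 1))) / M (2 ^ (-((j : ℝ) + 1))))) := by
  have hrw : ∀ j : ℕ, (2:ℝ) ^ (-((j : ℝ) + 1)) = OrliczProofAux.q j := by
    intro j
    have h1 : -((j : ℝ) + 1) = -(((j + 1 : ℕ) : ℝ)) := by push_cast; ring
    rw [h1, Real.rpow_neg (by norm_num), Real.rpow_natCast]
    rfl
  constructor
  · rintro ⟨K, hK, hs⟩
    refine ⟨2 * K, by linarith, ?_⟩
    simp only [hrw]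
    exact OrliczProofAux.dir1 M Minv hM0 hMpos hMmono hMconv hMinv_nonneg hMinv_left
      hMinv_right K hK hs
  · rintro ⟨K, hK, hs⟩
    refine ⟨2 * K, by linarith, ?_⟩
    simp only [hrw] at hs
    exact OrliczProofAux.dir2 M Minv hM0 hMpos hMmono hMconv hMinv_nonneg hMinv_left
      hMinv_right K hK hs
end

section
/- For an ordinal $\alpha$, define $q(\eta)$ as the unique ordinal with $\omega\, q(\eta) \le \eta < \omega(q(\eta)+1)$, and let $M_\alpha$ be the tree of finite sequences $t : n \to \omega\alpha$ ($1 \le n < \omega$) satisfying $t(i+1) < \omega\, q(t(i))$ whenever $i+1 < n$, ordered by end-extension. Then for every ordinal $\xi$, the $\xi$-th Cantor–Bendixson derivative of $M_\alpha$ (in the coarse wedge topology) equals $\{t \in M_\alpha : \xi \le q(t(|t|-1))\}$; consequently the scattered height of $M_\alpha$ is exactly $\alpha$. -/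
noncomputable section

/-- `q(η)` is the unique ordinal with `ω q(η) ≤ η < ω (q(η)+1)`, i.e. `η / ω`. -/
def qOrd (η : Ordinal) : Ordinal := η / Ordinal.omega0

/-- The tree `M_α`: non-empty finite sequences `t` of ordinals below `ω α` such that
`t(i+1) < ω q(t(i))`, represented as lists and ordered by end-extension. -/
def Mset (α : Ordinal) : Set (List Ordinal) :=
  {l | l ≠ [] ∧ (∀ x ∈ l, x < Ordinal.omega0 * α) ∧
    l.Chain' fun x y => y < Ordinal.omega0 * qOrd x}

/-- The coarse wedge topology on `M_α`, generated by the basic sets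
`U_{s,F} = {s} ∪ {t : s ≺ t, t(|s|) ∉ F}` for `s ∈ M_α` and finite `F ⊆ s(|s|-1)`. -/
def coarseWedge (α : Ordinal) : TopologicalSpace (Mset α) :=
  TopologicalSpace.generateFrom
    {V | ∃ (s : List Ordinal) (_ : s ∈ Mset α) (F : Finset Ordinal),
      (∀ x ∈ F, x < s.getLastD 0) ∧
      V = {t : Mset α | t.val = s ∨
        (s <+: t.val ∧ s ≠ t.val ∧ t.val.getD s.length 0 ∉ F)}}

/-- The derived set of `A`: the set of accumulation points of `A`. -/
def dSet {Y : Type*} [TopologicalSpace Y] (A : Set Y) : Set Y :=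
  {x | x ∈ closure (A \ {x})}

/-- The iterated Cantor–Bendixson derivative of the whole space:
`CBd 0 = univ`, `CBd (ξ+1) = (CBd ξ)'`, with intersections at limits. -/
def CBd {Y : Type*} [TopologicalSpace Y] : Ordinal → Set Y
  | ξ => ⋂ (η : Ordinal) (_ : η < ξ), dSet (CBd η)
termination_by ξ => ξ

/-! ### Auxiliary lemmas -/

lemma qOrd_lt_iff {η β : Ordinal} : qOrd η < β ↔ η < Ordinal.omega0 * β :=
  Ordinal.div_lt Ordinal.omega0_ne_zero

lemma le_qOrd_iff {η β : Ordinal} : β ≤ qOrd η ↔ Ordinal.omega0 * β ≤ η :=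
  Ordinal.le_div Ordinal.omega0_ne_zero

lemma omega0_mul_qOrd_le (η : Ordinal) : Ordinal.omega0 * qOrd η ≤ η :=
  Ordinal.mul_div_le η Ordinal.omega0

lemma getLastD_mem {l : List Ordinal} (h : l ≠ []) : l.getLastD 0 ∈ l := by
  cases l with
  | nil => exact absurd rfl h
  | cons a l => rw [List.getLastD_cons]; exact List.getLastD_mem_cons

lemma getLast?_eq_some {l : List Ordinal} (h : l ≠ []) :
    l.getLast? = some (l.getLastD 0) := by
  rw [List.getLast?_eq_getLast_of_ne_nil h]
  cases l with
  | nil => exact absurd rfl h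
  | cons a l => rw [List.getLast_eq_getLastD, List.getLastD_cons]

lemma qOrd_lt_of_mem_tail :
    ∀ {l : List Ordinal} {a x : Ordinal},
      List.Chain' (fun x y => y < Ordinal.omega0 * qOrd x) (a :: l) → x ∈ l →
        qOrd x < qOrd a := by
  intro l
  induction l with
  | nil => intro a x _ hx; simp at hx
  | cons b l ih =>
    intro a x hc hx
    have hab : b < Ordinal.omega0 * qOrd a := (List.isChain_cons_cons.mp hc).1
    have hba : qOrd b < qOrd a := qOrd_lt_iff.mpr hab
    rcases List.mem_cons.mp hx with rfl | hx
    · exact hba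
    · exact lt_trans (ih (List.isChain_cons_cons.mp hc).2 hx) hba

lemma qOrd_last_append {t r : List Ordinal} (ht : t ≠ []) (hr : r ≠ [])
    (hc : List.Chain' (fun x y => y < Ordinal.omega0 * qOrd x) (t ++ r)) :
    qOrd ((t ++ r).getLastD 0) < qOrd (t.getLastD 0) := by
  have hdrop : t.dropLast ++ [t.getLast ht] = t := List.dropLast_append_getLast ht
  have htr : t ++ r = t.dropLast ++ (t.getLast ht :: r) := by
    conv_lhs => rw [← hdrop]
    simp
  have hc2 : List.Chain' (fun x y => y < Ordinal.omega0 * qOrd x) (t.getLast ht :: r) := by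
    rw [htr] at hc
    exact (List.isChain_append.mp hc).2.1
  have hmem : (t ++ r).getLastD 0 ∈ r := by
    have : (t ++ r).getLastD 0 = r.getLastD 0 := by
      rw [List.getLastD_eq_getLast?, List.getLastD_eq_getLast?,
        List.getLast?_append_of_ne_nil _ hr]
    rw [this]
    exact getLastD_mem hr
  have hlast : t.getLastD 0 = t.getLast ht := by
    rw [List.getLastD_eq_getLast?, List.getLast?_eq_getLast_of_ne_nil ht]; rfl
  rw [hlast]
  exact qOrd_lt_of_mem_tail hc2 hmem

/-- The generating family of the coarse wedge topology. -/
def genSet (α : Ordinal) : Set (Set (Mset α)) :=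
  {V | ∃ (s : List Ordinal) (_ : s ∈ Mset α) (F : Finset Ordinal),
      (∀ x ∈ F, x < s.getLastD 0) ∧
      V = {t : Mset α | t.val = s ∨
        (s <+: t.val ∧ s ≠ t.val ∧ t.val.getD s.length 0 ∉ F)}}

lemma prefix_length_lt {s l : List Ordinal} (h : s <+: l) (hne : s ≠ l) :
    s.length < l.length :=
  lt_of_le_of_ne h.length_le fun he => hne (h.eq_of_length he)

lemma prefix_getD {s l : List Ordinal} (h : s <+: l) {n : ℕ} (hn : n < s.length) :
    l.getD n 0 = s.getD n 0 := by
  obtain ⟨r, rfl⟩ := h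
  exact List.getD_append s r 0 n hn

lemma mem_gen_of_ext {α : Ordinal} {s : List Ordinal} {F : Finset Ordinal} {t t' : Mset α}
    (ht : t.val = s ∨ (s <+: t.val ∧ s ≠ t.val ∧ t.val.getD s.length 0 ∉ F))
    (hpre : t.val <+: t'.val) (hne : t.val ≠ t'.val)
    (hG : s = t.val → t'.val.getD t.val.length 0 ∉ F) :
    t'.val = s ∨ (s <+: t'.val ∧ s ≠ t'.val ∧ t'.val.getD s.length 0 ∉ F) := by
  right
  rcases ht with h | ⟨h1, h2, h3⟩
  · subst h
    exact ⟨hpre, fun he => hne he, hG rfl⟩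
  · have hlt : s.length < t.val.length := prefix_length_lt h1 h2
    refine ⟨h1.trans hpre, ?_, ?_⟩
    · intro he
      have h4 : (t.val).length ≤ (t'.val).length := hpre.length_le
      have h5 : s.length = (t'.val).length := by rw [he]
      omega
    · rw [prefix_getD hpre hlt]
      exact h3

lemma isBasis (α : Ordinal) :
    @TopologicalSpace.IsTopologicalBasis (Mset α) (coarseWedge α) (genSet α) := by
  classical
  refine @TopologicalSpace.IsTopologicalBasis.mk _ (coarseWedge α) _ ?_ ?_ rfl
  · rintro U₁ ⟨s₁, hs₁, F₁, hF₁, rfl⟩ U₂ ⟨s₂, hs₂, F₂, hF₂, rfl⟩ t ⟨ht₁, ht₂⟩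
    set G : Finset Ordinal :=
      (if s₁ = t.val then F₁ else ∅) ∪ (if s₂ = t.val then F₂ else ∅) with hGdef
    refine ⟨{t' : Mset α | t'.val = t.val ∨
        (t.val <+: t'.val ∧ t.val ≠ t'.val ∧ t'.val.getD t.val.length 0 ∉ G)},
      ⟨t.val, t.2, G, ?_, rfl⟩, Or.inl rfl, ?_⟩
    · intro x hx
      rcases Finset.mem_union.mp hx with hx | hx
      · split_ifs at hx with h
        · rw [← h]; exact hF₁ x hx
        · simp at hx
      · split_ifs at hx with h
        · rw [← h]; exact hF₂ x hx
        · simp at hx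
    · rintro t' (h | ⟨hpre, hne, hG⟩)
      · have : t' = t := Subtype.ext h
        rw [this]; exact ⟨ht₁, ht₂⟩
      · constructor
        · refine mem_gen_of_ext ht₁ hpre hne fun hs => fun hmem => hG ?_
          rw [hGdef]
          exact Finset.mem_union_left _ (by rw [if_pos hs]; exact hmem)
        · refine mem_gen_of_ext ht₂ hpre hne fun hs => fun hmem => hG ?_
          rw [hGdef]
          exact Finset.mem_union_right _ (by rw [if_pos hs]; exact hmem)
  · apply Set.eq_univ_of_forall
    intro t
    exact ⟨_, ⟨t.val, t.2, ∅, by simp, rfl⟩, Or.inl rfl⟩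

/-- The key step: the derived set of `{t : ξ ≤ q(last t)}` is `{t : ξ+1 ≤ q(last t)}`. -/
lemma dSet_level (α ξ : Ordinal) :
    @dSet _ (coarseWedge α) {t : Mset α | ξ ≤ qOrd (t.val.getLastD 0)}
      = {t : Mset α | ξ + 1 ≤ qOrd (t.val.getLastD 0)} := by
  letI := coarseWedge α
  classical
  ext t
  simp only [dSet, Set.mem_setOf_eq, (isBasis α).mem_closure_iff]
  constructor
  · intro h
    rw [Ordinal.add_one_eq_succ, Order.succ_le_iff]
    by_contra hle
    push_neg at hle
    obtain ⟨t', hU, hS⟩ := h _ ⟨t.val, t.2, ∅, by simp, rfl⟩ (Or.inl rfl)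
    rcases hU with h' | ⟨hpre, hne, -⟩
    · exact hS.2 (Subtype.ext h')
    · obtain ⟨r, hr⟩ := hpre
      have hrne : r ≠ [] := by
        rintro rfl
        rw [List.append_nil] at hr
        exact hne hr
      have hchain := t'.2.2.2
      rw [← hr] at hchain
      have hq := qOrd_last_append t.2.1 hrne hchain
      rw [hr] at hq
      exact absurd (lt_of_lt_of_le hq hle) (not_lt.mpr hS.1)
  · intro h U hU htU
    have hξq : ξ < qOrd (t.val.getLastD 0) := by
      rw [Ordinal.add_one_eq_succ, Order.succ_le_iff] at h
      exact h
    obtain ⟨s, hs, F, hF, rfl⟩ := hU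
    -- choose η = ω ξ + n outside F
    have hinj : Function.Injective fun n : ℕ => Ordinal.omega0 * ξ + (n : Ordinal) := by
      intro m n hmn
      simpa using add_left_cancel_iff.mp hmn
    obtain ⟨η, ⟨n, rfl⟩, hηF⟩ :=
      (Set.infinite_range_of_injective hinj).exists_notMem_finset F
    set η : Ordinal := Ordinal.omega0 * ξ + (n : Ordinal) with hηdef
    have hξη : ξ ≤ qOrd η := le_qOrd_iff.mpr (le_self_add)
    have hηlt : η < Ordinal.omega0 * qOrd (t.val.getLastD 0) := by
      calc η < Ordinal.omega0 * ξ + Ordinal.omega0 :=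
              add_lt_add_right (Ordinal.nat_lt_omega0 n) _
        _ = Ordinal.omega0 * (ξ + 1) := by rw [mul_add_one]
        _ ≤ Ordinal.omega0 * qOrd (t.val.getLastD 0) := by
              apply mul_le_mul_right
              rwa [Ordinal.add_one_eq_succ, Order.succ_le_iff]
    have hlastmem : t.val.getLastD 0 ∈ t.val := getLastD_mem t.2.1
    have hηα : η < Ordinal.omega0 * α :=
      lt_of_lt_of_le hηlt (le_trans (omega0_mul_qOrd_le _) (le_of_lt (t.2.2.1 _ hlastmem)))
    have ht' : t.val ++ [η] ∈ Mset α := by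
      refine ⟨by simp, ?_, ?_⟩
      · intro x hx
        rcases List.mem_append.mp hx with hx | hx
        · exact t.2.2.1 x hx
        · rw [List.mem_singleton.mp hx]; exact hηα
      · apply List.isChain_append.mpr
        refine ⟨t.2.2.2, List.isChain_singleton _, ?_⟩
        intro x hx y hy
        rw [getLast?_eq_some t.2.1] at hx
        simp only [List.head?_cons, Option.mem_def, Option.some.injEq] at hx hy
        rw [← hx, ← hy]
        exact hηlt
    set T' : Mset α := ⟨t.val ++ [η], ht'⟩ with hT'
    have hpre : t.val <+: T'.val := ⟨[η], rfl⟩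
    have hne : t.val ≠ T'.val := by
      intro he
      have := congrArg List.length he
      simp [hT'] at this
    have hgetD : T'.val.getD t.val.length 0 = η := by
      show (t.val ++ [η]).getD t.val.length 0 = η
      rw [List.getD_eq_getElem?_getD, List.getElem?_append_right (le_refl _)]
      simp
    refine ⟨T', mem_gen_of_ext htU hpre hne ?_, ?_, ?_⟩
    · intro _
      rw [hgetD]
      exact hηF
    · show ξ ≤ qOrd (T'.val.getLastD 0)
      have : T'.val.getLastD 0 = η := List.getLastD_concat
      rw [this]
      exact hξη
    · intro hmem
      apply hne
      rw [Set.mem_singleton_iff] at hmem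
      rw [hmem]

/-- The main level computation. -/
lemma CBd_level (α : Ordinal) (ξ : Ordinal) :
    @CBd _ (coarseWedge α) ξ = {t : Mset α | ξ ≤ qOrd (t.val.getLastD 0)} := by
  induction ξ using Ordinal.induction with
  | h ξ IH =>
    rw [@CBd.eq_def _ (coarseWedge α) ξ]
    have hlev : ∀ η < ξ, @dSet _ (coarseWedge α) (@CBd _ (coarseWedge α) η)
        = {t : Mset α | η + 1 ≤ qOrd (t.val.getLastD 0)} := fun η hη => by
      rw [IH η hη, dSet_level]
    ext t
    simp only [Set.mem_iInter, Set.mem_setOf_eq]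
    constructor
    · intro h
      by_contra hc
      push_neg at hc
      have h2 := h _ hc
      rw [hlev _ hc] at h2
      have : qOrd (t.val.getLastD 0) + 1 ≤ qOrd (t.val.getLastD 0) := h2
      rw [Ordinal.add_one_eq_succ, Order.succ_le_iff] at this
      exact lt_irrefl _ this
    · intro h η hη
      rw [hlev η hη]
      show η + 1 ≤ qOrd (t.val.getLastD 0)
      rw [Ordinal.add_one_eq_succ, Order.succ_le_iff]
      exact lt_of_lt_of_le hη h

/-- For every ordinal `ξ`, the `ξ`-th Cantor–Bendixson derivative of `M_α` in the coarse
wedge topology is `{t ∈ M_α : ξ ≤ q(t(|t|-1))}`; consequently the scattered height of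
`M_α` (the least `Ω` with empty `Ω`-th derivative) is exactly `α`. -/
theorem cantorBendixson_Malpha (α : Ordinal) :
    (∀ ξ : Ordinal,
      @CBd _ (coarseWedge α) ξ = {t : Mset α | ξ ≤ qOrd (t.val.getLastD 0)}) ∧
    sInf {Ω : Ordinal | @CBd _ (coarseWedge α) Ω = (∅ : Set (Mset α))} = α := by
  refine ⟨CBd_level α, ?_⟩
  have hmem : α ∈ {Ω : Ordinal | @CBd _ (coarseWedge α) Ω = (∅ : Set (Mset α))} := by
    show @CBd _ (coarseWedge α) α = ∅
    rw [CBd_level]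
    ext t
    simp only [Set.mem_setOf_eq, Set.mem_empty_iff_false, iff_false, not_le]
    exact qOrd_lt_iff.mpr (t.2.2.1 _ (getLastD_mem t.2.1))
  have hlb : ∀ Ω ∈ {Ω : Ordinal | @CBd _ (coarseWedge α) Ω = (∅ : Set (Mset α))},
      α ≤ Ω := by
    intro Ω hΩ
    by_contra hlt
    push_neg at hlt
    have hmem2 : ([Ordinal.omega0 * Ω] : List Ordinal) ∈ Mset α := by
      refine ⟨by simp, ?_, List.isChain_singleton _⟩
      intro x hx
      rw [List.mem_singleton.mp hx]
      exact mul_lt_mul_of_pos_left hlt Ordinal.omega0_pos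
    have hin : (⟨_, hmem2⟩ : Mset α) ∈
        {t : Mset α | Ω ≤ qOrd (t.val.getLastD 0)} := by
      show Ω ≤ qOrd (([Ordinal.omega0 * Ω] : List Ordinal).getLastD 0)
      simp only [List.getLastD_cons, List.getLastD_nil]
      rw [qOrd, Ordinal.mul_div_cancel _ Ordinal.omega0_ne_zero]
    rw [← CBd_level α Ω] at hin
    rw [Set.mem_setOf_eq] at hΩ
    rw [hΩ] at hin
    exact hin
  exact le_antisymm (csInf_le' hmem) (le_csInf ⟨α, hmem⟩ hlb)

end
end
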